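/- Let p, q be positive integers with gcd(p,q) = 1 and 0 ≤ p/q < 1, and consider the sequence c_n = e^{2πin²p/q}. For t ∈ [0,1): (i) if t is irrational, or t = r/s is rational in lowest terms with s not dividing q, then lim_{N→∞} (1/N)·Σ_{n=1}^N e^{2πin²p/q} e^{-2πint} = 0; (ii) if t = r/s is rational in lowest terms with s dividing q, then lim_{N→∞} (1/N)·Σ_{n=1}^N e^{2πin²p/q} e^{-2πint} = (1/q)·Σ_{k=0}^{q−1} e^{2πi(k²p/q + kr/s)}. In particular, the spectrum of (c_n) (the set of t ∈ [0,1) for which this limit is nonzero) consists exactly of the rationals r/s with s | q and Σ_{k=0}^{q−1} e^{2πi(k²p/q + kr/s)} ≠ 0. -/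

import Mathlib

open Filter Finset Topology

/-- The twisted Cesàro means of the sequence `c_n = e^{2πin²p/q}` at frequency `t`. -/
noncomputable def quadCesaro (p q : ℕ) (t : ℝ) (N : ℕ) : ℂ :=
  (N : ℂ)⁻¹ * ∑ n ∈ Finset.Icc 1 N,
    Complex.exp (2 * Real.pi * Complex.I * (n : ℂ) ^ 2 * p / q) *
      Complex.exp (-(2 * Real.pi * Complex.I * n * t))

noncomputable def ee (x : ℝ) : ℂ := Complex.exp ((x : ℂ) * (2 * Real.pi * Complex.I))

lemma ee_zero : ee 0 = 1 := by simp [ee]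

lemma ee_add (x y : ℝ) : ee (x + y) = ee x * ee y := by
  rw [ee, ee, ee, ← Complex.exp_add]
  push_cast
  ring_nf

lemma ee_int (m : ℤ) : ee m = 1 := by
  rw [ee]
  push_cast
  exact Complex.exp_int_mul_two_pi_mul_I m

lemma ee_add_int (x : ℝ) (m : ℤ) : ee (x + m) = ee x := by
  rw [ee_add, ee_int, mul_one]

lemma ee_norm (x : ℝ) : ‖ee x‖ = 1 := by
  rw [ee]
  have h : (x : ℂ) * (2 * Real.pi * Complex.I) = ((2 * Real.pi * x : ℝ) : ℂ) * Complex.I := by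
    push_cast; ring
  rw [h, Complex.norm_exp_ofReal_mul_I]

noncomputable def Fq (p q : ℕ) (t : ℝ) (n : ℕ) : ℂ := ee ((n : ℝ) ^ 2 * p / q - n * t)

lemma Fq_norm (p q : ℕ) (t : ℝ) (n : ℕ) : ‖Fq p q t n‖ = 1 := ee_norm _

lemma quadCesaro_eq (p q : ℕ) (t : ℝ) (N : ℕ) :
    quadCesaro p q t N = (N : ℂ)⁻¹ * ∑ n ∈ Finset.Icc 1 N, Fq p q t n := by
  unfold quadCesaro Fq
  congr 1
  refine Finset.sum_congr rfl fun n _ => ?_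
  rw [show ((n : ℝ) ^ 2 * p / q - n * t) = ((n : ℝ) ^ 2 * p / q) + (-(n * t)) by ring, ee_add]
  congr 1
  · unfold ee; congr 1; push_cast; ring
  · unfold ee; congr 1; push_cast; ring

lemma Fq_add (p q : ℕ) (hq : 0 < q) (t : ℝ) (n : ℕ) :
    Fq p q t (n + q) = ee (-(q * t)) * Fq p q t n := by
  have hq' : (q : ℝ) ≠ 0 := Nat.cast_ne_zero.2 hq.ne'
  have harg : ((n + q : ℕ) : ℝ) ^ 2 * p / q - ((n + q : ℕ) : ℝ) * t
      = ((-(q * t)) + ((n : ℝ) ^ 2 * p / q - n * t)) + ((2 * n * p + q * p : ℕ) : ℤ) := by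
    push_cast
    field_simp
    ring
  unfold Fq
  rw [harg, ee_add_int, ee_add]

lemma Fq_shift (p q : ℕ) (hq : 0 < q) (t : ℝ) (m n : ℕ) :
    Fq p q t (n + m * q) = (ee (-(q * t))) ^ m * Fq p q t n := by
  induction m with
  | zero => simp
  | succ m ih =>
    have h : n + (m + 1) * q = (n + m * q) + q := by ring
    rw [h, Fq_add p q hq t, ih, pow_succ]
    ring

lemma sum_block (p q : ℕ) (hq : 0 < q) (t : ℝ) (m : ℕ) :
    ∑ n ∈ Finset.Ioc (m * q) (m * q + q), Fq p q t n
      = (ee (-(q * t))) ^ m * ∑ n ∈ Finset.Ioc 0 q, Fq p q t n := by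
  have h : Finset.Ioc (m * q) (m * q + q)
      = (Finset.Ioc 0 q).map (addRightEmbedding (m * q)) := by
    rw [Finset.map_add_right_Ioc]
    congr 1 <;> omega
  rw [h, Finset.sum_map, Finset.mul_sum]
  refine Finset.sum_congr rfl fun n _ => ?_
  simp only [addRightEmbedding, Function.Embedding.coeFn_mk]
  exact Fq_shift p q hq t m n

lemma sum_blocks (p q : ℕ) (hq : 0 < q) (t : ℝ) (m : ℕ) :
    ∑ n ∈ Finset.Ioc 0 (m * q), Fq p q t n
      = (∑ j ∈ Finset.range m, (ee (-(q * t))) ^ j) * ∑ n ∈ Finset.Ioc 0 q, Fq p q t n := by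
  induction m with
  | zero => simp
  | succ m ih =>
    have h1 : m * q ≤ (m + 1) * q := Nat.mul_le_mul m.le_succ le_rfl
    rw [← Finset.sum_Ioc_consecutive _ (Nat.zero_le (m * q)) h1, ih,
      show (m + 1) * q = m * q + q by ring, sum_block p q hq t,
      Finset.sum_range_succ, add_mul]

lemma tail_le (p q : ℕ) (hq : 0 < q) (t : ℝ) (N : ℕ) :
    ‖∑ n ∈ Finset.Ioc (N / q * q) N, Fq p q t n‖ ≤ (q : ℝ) := by
  refine le_trans (norm_sum_le _ _) ?_
  rw [Finset.sum_congr rfl fun n _ => Fq_norm p q t n, Finset.sum_const, Nat.card_Ioc,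
    nsmul_eq_mul, mul_one]
  have e := Nat.div_add_mod N q
  have hlt := Nat.mod_lt N hq
  have h5 : N ≤ N / q * q + q := by
    calc N = q * (N / q) + N % q := e.symm
    _ ≤ q * (N / q) + q := Nat.add_le_add_left hlt.le _
    _ = N / q * q + q := by rw [mul_comm]
  exact_mod_cast Nat.sub_le_iff_le_add.mpr (by rw [add_comm]; exact h5)

lemma cesaro_zero (f : ℕ → ℂ) (C : ℝ) (h : ∀ N, ‖∑ n ∈ Finset.Icc 1 N, f n‖ ≤ C) :
    Tendsto (fun N : ℕ => (N : ℂ)⁻¹ * ∑ n ∈ Finset.Icc 1 N, f n) atTop (nhds 0) := by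
  refine squeeze_zero_norm (a := fun N : ℕ => C / N) (fun N => ?_)
    (tendsto_const_div_atTop_nhds_zero_nat C)
  rw [norm_mul, norm_inv, Complex.norm_natCast]
  show ((N:ℝ))⁻¹ * ‖∑ n ∈ Finset.Icc 1 N, f n‖ ≤ C / (N:ℝ)
  rcases Nat.eq_zero_or_pos N with h0 | h0
  · subst h0; simp
  · rw [div_eq_inv_mul]
    have : (0:ℝ) < N := by exact_mod_cast h0
    gcongr
    exact h N

lemma tendsto_ne_one (p q : ℕ) (hq : 0 < q) (t : ℝ) (hz : ee (-(q * t)) ≠ 1) :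
    Tendsto (quadCesaro p q t) atTop (nhds 0) := by
  have hfun : quadCesaro p q t
      = fun N : ℕ => (N : ℂ)⁻¹ * ∑ n ∈ Finset.Icc 1 N, Fq p q t n := funext (quadCesaro_eq p q t)
  rw [hfun]
  set z := ee (-(q * t)) with hzdef
  set T := ∑ n ∈ Finset.Ioc 0 q, Fq p q t n with hT
  have hzn : ‖z‖ = 1 := ee_norm _
  have hz1 : 0 < ‖z - 1‖ := by rw [norm_pos_iff]; exact sub_ne_zero.mpr hz
  have hgeom : ∀ m : ℕ, ‖∑ j ∈ Finset.range m, z ^ j‖ ≤ 2 / ‖z - 1‖ := by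
    intro m
    rw [geom_sum_eq hz, norm_div]
    gcongr
    calc ‖z ^ m - 1‖ ≤ ‖z ^ m‖ + ‖(1 : ℂ)‖ := norm_sub_le _ _
    _ = 2 := by rw [norm_pow, hzn, one_pow, norm_one]; norm_num
  refine cesaro_zero _ (2 / ‖z - 1‖ * ‖T‖ + q) fun N => ?_
  rw [show Finset.Icc 1 N = Finset.Ioc 0 N by ext x; simp only [Finset.mem_Icc, Finset.mem_Ioc]; omega,
    ← Finset.sum_Ioc_consecutive (Fq p q t) (Nat.zero_le (N / q * q)) (Nat.div_mul_le_self N q)]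
  refine le_trans (norm_add_le _ _) (add_le_add ?_ (tail_le p q hq t N))
  rw [sum_blocks p q hq t (N / q), norm_mul]
  gcongr
  exact hgeom _

lemma div_key (q : ℕ) (hq : 0 < q) (N : ℕ) (hN : 1 ≤ N) :
    |((N / q : ℕ) : ℝ) / N - 1 / q| ≤ 1 / N := by
  have hq' : (q : ℝ) ≠ 0 := Nat.cast_ne_zero.2 hq.ne'
  have hN' : (0:ℝ) < N := by exact_mod_cast hN
  have eR : (q : ℝ) * ((N / q : ℕ) : ℝ) + ((N % q : ℕ) : ℝ) = N := by
    exact_mod_cast Nat.div_add_mod N q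
  have h1 : ((N / q : ℕ) : ℝ) / N - 1 / q = -(((N % q : ℕ) : ℝ) / (N * q)) := by
    field_simp
    linarith [eR]
  rw [h1, abs_neg, abs_of_nonneg (by positivity)]
  have hmod : ((N % q : ℕ) : ℝ) ≤ q := by exact_mod_cast (Nat.mod_lt N hq).le
  calc ((N % q : ℕ) : ℝ) / (N * q) ≤ (q : ℝ) / (N * q) := by gcongr
  _ = 1 / N := by rw [div_eq_div_iff (by positivity) hN'.ne']; ring

lemma tendsto_eq_one (p q : ℕ) (hq : 0 < q) (t : ℝ) (hz : ee (-(q * t)) = 1) :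
    Tendsto (quadCesaro p q t) atTop
      (nhds ((q : ℂ)⁻¹ * ∑ n ∈ Finset.Ioc 0 q, Fq p q t n)) := by
  have hfun : quadCesaro p q t
      = fun N : ℕ => (N : ℂ)⁻¹ * ∑ n ∈ Finset.Icc 1 N, Fq p q t n := funext (quadCesaro_eq p q t)
  rw [hfun]
  set T := ∑ n ∈ Finset.Ioc 0 q, Fq p q t n with hT
  have hSm : ∀ m : ℕ, ∑ n ∈ Finset.Ioc 0 (m * q), Fq p q t n = (m : ℂ) * T := by
    intro m
    rw [sum_blocks p q hq t m, hz]
    simp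
    exact Or.inl rfl
  rw [← tendsto_sub_nhds_zero_iff]
  refine squeeze_zero_norm' ?_ (tendsto_const_div_atTop_nhds_zero_nat (‖T‖ + q))
  filter_upwards [eventually_ge_atTop 1] with N hN
  have hN' : (0:ℝ) < N := by exact_mod_cast hN
  have hSN : ∑ n ∈ Finset.Icc 1 N, Fq p q t n
      = ((N / q : ℕ) : ℂ) * T + ∑ n ∈ Finset.Ioc (N / q * q) N, Fq p q t n := by
    rw [show Finset.Icc 1 N = Finset.Ioc 0 N by ext x; simp only [Finset.mem_Icc, Finset.mem_Ioc]; omega,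
      ← Finset.sum_Ioc_consecutive (Fq p q t) (Nat.zero_le (N / q * q)) (Nat.div_mul_le_self N q),
      hSm (N / q)]
  rw [hSN]
  have hdecomp : (N : ℂ)⁻¹ * (((N / q : ℕ) : ℂ) * T + ∑ n ∈ Finset.Ioc (N / q * q) N, Fq p q t n)
      - (q : ℂ)⁻¹ * T
      = ((N : ℂ)⁻¹ * ((N / q : ℕ) : ℂ) - (q : ℂ)⁻¹) * T
        + (N : ℂ)⁻¹ * ∑ n ∈ Finset.Ioc (N / q * q) N, Fq p q t n := by ring
  rw [hdecomp]
  have hfac : (N : ℂ)⁻¹ * ((N / q : ℕ) : ℂ) - (q : ℂ)⁻¹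
      = ((((N / q : ℕ) : ℝ) / N - 1 / q : ℝ) : ℂ) := by push_cast; ring
  refine le_trans (norm_add_le _ _) ?_
  rw [norm_mul, norm_mul, hfac, Complex.norm_real, norm_inv, Complex.norm_natCast]
  have h1 : ‖(((N / q : ℕ) : ℝ) / N - 1 / q : ℝ)‖ ≤ 1 / N := by
    rw [Real.norm_eq_abs]; exact div_key q hq N hN
  calc ‖(((N / q : ℕ) : ℝ) / N - 1 / q : ℝ)‖ * ‖T‖
        + ((N:ℝ))⁻¹ * ‖∑ n ∈ Finset.Ioc (N / q * q) N, Fq p q t n‖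
      ≤ (1 / N) * ‖T‖ + ((N:ℝ))⁻¹ * q := by
        have htail := tail_le p q hq t N
        gcongr
  _ = (‖T‖ + q) / N := by field_simp

lemma sum_Ioc_eq_range (g : ℕ → ℂ) (q : ℕ) (hg : g q = g 0) :
    ∑ n ∈ Finset.Ioc 0 q, g n = ∑ n ∈ Finset.range q, g n := by
  have hins : insert 0 (Finset.Ioc 0 q) = Finset.range (q + 1) := by
    ext x
    simp only [Finset.mem_insert, Finset.mem_Ioc, Finset.mem_range]
    omega
  have h0 : (0 : ℕ) ∉ Finset.Ioc 0 q := by simp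
  have h := Finset.sum_insert (f := g) h0
  rw [hins, Finset.sum_range_succ, hg] at h
  rw [add_comm (g 0)] at h
  exact (add_right_cancel h).symm

lemma gauss_eq (p q : ℕ) (hq : 0 < q) (r s : ℤ) (hs : 0 < s) (hdvd : s ∣ (q : ℤ)) :
    ∑ n ∈ Finset.Ioc 0 q, Fq p q ((r : ℝ) / s) n
      = ∑ k ∈ Finset.range q, Complex.exp (2 * Real.pi * Complex.I *
          ((k : ℂ) ^ 2 * p / q + (k : ℂ) * r / s)) := by
  obtain ⟨c, hc⟩ := hdvd
  have hs0 : (s : ℝ) ≠ 0 := by exact_mod_cast hs.ne'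
  have hq0 : (q : ℝ) ≠ 0 := Nat.cast_ne_zero.2 hq.ne'
  have hcR : (q : ℝ) = (s : ℝ) * c := by exact_mod_cast hc
  have hts : (r : ℝ) / s = ((c * r : ℤ) : ℝ) / q := by
    rw [div_eq_div_iff hs0 hq0, hcR]
    push_cast
    ring
  set G : ℕ → ℂ := fun k => ee ((k : ℝ) ^ 2 * p / q + k * (((c * r : ℤ) : ℝ)) / q) with hG
  have hGexp : ∀ k : ℕ, Complex.exp (2 * Real.pi * Complex.I *
      ((k : ℂ) ^ 2 * p / q + (k : ℂ) * r / s)) = G k := by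
    intro k
    have hcC : (r : ℂ) / s = ((c * r : ℤ) : ℂ) / q := by exact_mod_cast hts
    rw [hG]
    unfold ee
    congr 1
    rw [show (k : ℂ) * r / s = (k : ℂ) * ((r:ℂ) / s) by ring, hcC]
    push_cast
    ring
  have hFF : ∀ n : ℕ, Fq p q ((r : ℝ) / s) n = ee ((n : ℝ) ^ 2 * p / q - n * (((c * r : ℤ) : ℝ) / q)) := by
    intro n
    unfold Fq
    rw [hts]
  rw [Finset.sum_congr rfl fun k _ => hGexp k, Finset.sum_congr rfl fun n _ => hFF n]
  set F : ℕ → ℂ := fun n => ee ((n : ℝ) ^ 2 * p / q - n * (((c * r : ℤ) : ℝ) / q)) with hF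
  have hF0 : F q = F 0 := by
    rw [hF]
    have h1 : (q : ℝ) ^ 2 * p / q - q * (((c * r : ℤ) : ℝ) / q)
        = ((0:ℕ) : ℝ) ^ 2 * p / q - ((0:ℕ) : ℝ) * (((c * r : ℤ) : ℝ) / q) + ((q * p - c * r : ℤ) : ℝ) := by
      push_cast
      field_simp
      ring
    simp only []
    rw [h1, ee_add_int]
  rw [sum_Ioc_eq_range F q hF0, ← Finset.sum_range_reflect F q]
  have h2 : ∀ j ∈ Finset.range q, F (q - 1 - j) = G (j + 1) := by
    intro j hj
    rw [Finset.mem_range] at hj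
    have hj1 : j + 1 ≤ q := hj
    have hqj : q - 1 - j = q - (j + 1) := by omega
    rw [hqj, hF, hG]
    simp only []
    have harg : ((q - (j+1) : ℕ) : ℝ) ^ 2 * p / q - ((q - (j+1) : ℕ) : ℝ) * (((c * r : ℤ) : ℝ) / q)
        = (((j+1 : ℕ)) : ℝ) ^ 2 * p / q + ((j+1 : ℕ) : ℝ) * (((c * r : ℤ) : ℝ)) / q
          + (((q : ℤ) * p - 2 * (j+1) * p - c * r : ℤ) : ℝ) := by
      rw [Nat.cast_sub hj1]
      push_cast
      field_simp
      ring
    rw [harg, ee_add_int]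
  rw [Finset.sum_congr rfl h2]
  have hGq : G q = G 0 := by
    rw [hG]
    have h1 : (q : ℝ) ^ 2 * p / q + q * (((c * r : ℤ) : ℝ)) / q
        = ((0:ℕ) : ℝ) ^ 2 * p / q + ((0:ℕ) : ℝ) * (((c * r : ℤ) : ℝ)) / q + ((q * p + c * r : ℤ) : ℝ) := by
      push_cast
      field_simp
      ring
    simp only []
    rw [h1, ee_add_int]
  have h4 := Finset.sum_range_succ' G q
  have h5 := Finset.sum_range_succ G q
  rw [h5, hGq] at h4
  exact add_right_cancel (h4.symm)

lemma ee_ne_one_of_not_int (q : ℕ) (hq : 0 < q) (t : ℝ)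
    (h : ∀ n : ℤ, (q : ℝ) * t ≠ n) : ee (-(q * t)) ≠ 1 := by
  intro hcon
  rw [ee, Complex.exp_eq_one_iff] at hcon
  obtain ⟨n, hn⟩ := hcon
  have h2 : (2 * (Real.pi : ℂ) * Complex.I) ≠ 0 := by
    simp [Real.pi_ne_zero, Complex.I_ne_zero]
  have h3 : ((-(q * t) : ℝ) : ℂ) = (n : ℂ) := mul_right_cancel₀ h2 hn
  have h4 : -((q : ℝ) * t) = (n : ℝ) := by exact_mod_cast h3
  exact h (-n) (by push_cast; linarith)

lemma ee_one_of_dvd (q : ℕ) (r s : ℤ) (hs : 0 < s) (hdvd : s ∣ (q : ℤ)) :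
    ee (-((q : ℝ) * ((r : ℝ) / s))) = 1 := by
  obtain ⟨c, hc⟩ := hdvd
  have hs0 : (s : ℝ) ≠ 0 := by exact_mod_cast hs.ne'
  have hcR : (q : ℝ) = (s : ℝ) * c := by exact_mod_cast hc
  have h1 : -((q : ℝ) * ((r : ℝ) / s)) = 0 + ((-(c * r) : ℤ) : ℝ) := by
    rw [hcR]
    push_cast
    field_simp
    ring
  rw [h1, ee_add_int, ee_zero]

/-- For `c_n = e^{2πin²p/q}` with `gcd(p,q)=1`, `0 ≤ p/q < 1`:
(i) the Cesàro means at irrational `t`, and at rationals `r/s` in lowest terms with `s ∤ q`,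
tend to `0`; (ii) at rationals `r/s` in lowest terms with `s ∣ q` they tend to
`(1/q)·∑_{k<q} e^{2πi(k²p/q+kr/s)}`; and the spectrum consists exactly of the rationals
`r/s` with `s ∣ q` and nonvanishing Gauss-type sum. -/
theorem quadratic_rational_spectrum
    (p q : ℕ) (hq : 0 < q) (hpq : Nat.Coprime p q) (hpltq : p < q) :
    (∀ t : ℝ, 0 ≤ t → t < 1 → Irrational t →
      Filter.Tendsto (quadCesaro p q t) Filter.atTop (nhds 0)) ∧
    (∀ r s : ℤ, 0 < s → IsCoprime r s → ¬ (s ∣ (q : ℤ)) →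
      0 ≤ (r : ℝ) / s → (r : ℝ) / s < 1 →
      Filter.Tendsto (quadCesaro p q ((r : ℝ) / s)) Filter.atTop (nhds 0)) ∧
    (∀ r s : ℤ, 0 < s → IsCoprime r s → (s ∣ (q : ℤ)) →
      0 ≤ (r : ℝ) / s → (r : ℝ) / s < 1 →
      Filter.Tendsto (quadCesaro p q ((r : ℝ) / s)) Filter.atTop
        (nhds ((q : ℂ)⁻¹ * ∑ k ∈ Finset.range q,
          Complex.exp (2 * Real.pi * Complex.I *
            ((k : ℂ) ^ 2 * p / q + (k : ℂ) * r / s))))) ∧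
    ({t : ℝ | 0 ≤ t ∧ t < 1 ∧ ¬ Filter.Tendsto (quadCesaro p q t) Filter.atTop (nhds 0)} =
      {t : ℝ | 0 ≤ t ∧ t < 1 ∧ ∃ r s : ℤ, 0 < s ∧ IsCoprime r s ∧ t = (r : ℝ) / s ∧
        (s ∣ (q : ℤ)) ∧
        (∑ k ∈ Finset.range q,
          Complex.exp (2 * Real.pi * Complex.I *
            ((k : ℂ) ^ 2 * p / q + (k : ℂ) * r / s))) ≠ 0}) := by
  have hq0 : (q : ℝ) ≠ 0 := Nat.cast_ne_zero.2 hq.ne'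
  have P1 : ∀ t : ℝ, Irrational t → Filter.Tendsto (quadCesaro p q t) Filter.atTop (nhds 0) := by
    intro t ht
    refine tendsto_ne_one p q hq t (ee_ne_one_of_not_int q hq t fun n hn => ?_)
    have : t = ((n : ℝ) / q) := by field_simp at hn ⊢; linarith
    exact ht ⟨(n : ℚ) / (q : ℚ), by push_cast; rw [this]⟩
  have P2 : ∀ r s : ℤ, 0 < s → IsCoprime r s → ¬ (s ∣ (q : ℤ)) →
      Filter.Tendsto (quadCesaro p q ((r : ℝ) / s)) Filter.atTop (nhds 0) := by
    intro r s hs hcop hndvd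
    have hs0 : (s : ℝ) ≠ 0 := by exact_mod_cast hs.ne'
    refine tendsto_ne_one p q hq _ (ee_ne_one_of_not_int q hq _ fun n hn => ?_)
    have h1 : (q : ℝ) * r = n * s := by field_simp at hn; linarith
    have h2 : (q : ℤ) * r = n * s := by exact_mod_cast h1
    exact hndvd (hcop.symm.dvd_of_dvd_mul_right ⟨n, by linarith [h2]⟩)
  have P3 : ∀ r s : ℤ, 0 < s → IsCoprime r s → (s ∣ (q : ℤ)) →
      Filter.Tendsto (quadCesaro p q ((r : ℝ) / s)) Filter.atTop
        (nhds ((q : ℂ)⁻¹ * ∑ k ∈ Finset.range q,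
          Complex.exp (2 * Real.pi * Complex.I *
            ((k : ℂ) ^ 2 * p / q + (k : ℂ) * r / s)))) := by
    intro r s hs hcop hdvd
    have := tendsto_eq_one p q hq ((r : ℝ) / s) (ee_one_of_dvd q r s hs hdvd)
    rwa [gauss_eq p q hq r s hs hdvd] at this
  refine ⟨fun t _ _ ht => P1 t ht, fun r s hs hcop hnd _ _ => P2 r s hs hcop hnd,
    fun r s hs hcop hd _ _ => P3 r s hs hcop hd, ?_⟩
  ext t
  simp only [Set.mem_setOf_eq]
  constructor
  · rintro ⟨h0, h1, hnot⟩
    refine ⟨h0, h1, ?_⟩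
    by_cases hirr : Irrational t
    · exact absurd (P1 t hirr) hnot
    · rw [Irrational] at hirr
      push_neg at hirr
      obtain ⟨x, hx⟩ := hirr
      have hs : (0 : ℤ) < (x.den : ℤ) := by exact_mod_cast x.pos
      have hcop : IsCoprime x.num (x.den : ℤ) := by
        rw [Int.isCoprime_iff_gcd_eq_one]
        simpa [Int.gcd] using x.reduced
      have htx : t = (x.num : ℝ) / (x.den : ℤ) := by
        rw [← hx, Rat.cast_def]
        norm_num
      by_cases hd : ((x.den : ℤ)) ∣ (q : ℤ)
      · refine ⟨x.num, x.den, hs, hcop, htx, hd, fun hzero => hnot ?_⟩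
        have := P3 x.num x.den hs hcop hd
        rw [hzero, mul_zero, ← htx] at this
        exact this
      · exact absurd (htx ▸ P2 x.num x.den hs hcop hd) hnot
  · rintro ⟨h0, h1, r, s, hs, hcop, ht, hdvd, hne⟩
    refine ⟨h0, h1, fun hcon => ?_⟩
    have h2 := P3 r s hs hcop hdvd
    rw [← ht] at h2
    have h3 := tendsto_nhds_unique hcon h2
    rcases mul_eq_zero.mp h3.symm with h4 | h4
    · exact (inv_ne_zero (Nat.cast_ne_zero.2 hq.ne' : (q:ℂ) ≠ 0)) h4
    · exact hne h4
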